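/- Let Σ, V be real Hilbert spaces, a : Σ × Σ → ℝ and b : Σ × V → ℝ continuous bilinear forms. Let Z = {σ ∈ Σ : b(σ,v) = 0 for all v ∈ V}. Assume a is Z-elliptic (a(σ,σ) ≥ α‖σ‖² for all σ ∈ Z, some α > 0) and b satisfies the inf-sup condition with constant β > 0. Then for every κ ∈ Σ and l ∈ V there exists a unique pair (σ,u) ∈ Σ × V with a(σ,τ) + b(τ,u) = (κ,τ)_Σ for all τ ∈ Σ and b(σ,v) = (l,v)_V for all v ∈ V. -/

import Mathlib

open scoped RealInnerProductSpace

open InnerProductSpace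

noncomputable section BB

-- Bd : V →L[ℝ] E with ⟪Bd v, τ⟫ = b τ v
def Bdual {E V : Type*}
    [NormedAddCommGroup E] [InnerProductSpace ℝ E] [CompleteSpace E]
    [NormedAddCommGroup V] [InnerProductSpace ℝ V]
    (b : E →L[ℝ] V →L[ℝ] ℝ) : V →L[ℝ] E :=
  LinearMap.mkContinuous
    { toFun := fun v => (InnerProductSpace.toDual ℝ E).symm (b.flip v)
      map_add' := by intro x y; simp
      map_smul' := by intro c x; simp }
    ‖b.flip‖
    (by intro v
        simp only [LinearMap.coe_mk, AddHom.coe_mk]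
        rw [LinearIsometryEquiv.norm_map]
        exact (b.flip).le_opNorm v)

theorem Bdual_inner {E V : Type*}
    [NormedAddCommGroup E] [InnerProductSpace ℝ E] [CompleteSpace E]
    [NormedAddCommGroup V] [InnerProductSpace ℝ V]
    (b : E →L[ℝ] V →L[ℝ] ℝ) (v : V) (τ : E) :
    ⟪Bdual b v, τ⟫ = b τ v := by
  simp [Bdual, LinearMap.mkContinuous_apply, InnerProductSpace.toDual_symm_apply]

variable {E V : Type*}
    [NormedAddCommGroup E] [InnerProductSpace ℝ E] [CompleteSpace E]
    [NormedAddCommGroup V] [InnerProductSpace ℝ V] [CompleteSpace V]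

theorem Bdual_lower (b : E →L[ℝ] V →L[ℝ] ℝ) (β : ℝ) (hβ : 0 < β)
    (hinfsup : ∀ v : V, β * ‖v‖ ≤ ⨆ τ : {τ : E // τ ≠ 0}, b τ v / ‖(τ : E)‖)
    (v : V) : β * ‖v‖ ≤ ‖Bdual b v‖ := by
  refine le_trans (hinfsup v) (Real.iSup_le (fun τ => ?_) (norm_nonneg _))
  have hτ : 0 < ‖(τ : E)‖ := norm_pos_iff.mpr τ.2
  rw [div_le_iff₀ hτ]
  calc b (τ : E) v = ⟪Bdual b v, (τ : E)⟫ := (Bdual_inner b v τ).symm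
    _ ≤ ‖Bdual b v‖ * ‖(τ : E)‖ := real_inner_le_norm _ _

theorem Bdual_antilipschitz (b : E →L[ℝ] V →L[ℝ] ℝ) (β : ℝ) (hβ : 0 < β)
    (hlow : ∀ v : V, β * ‖v‖ ≤ ‖Bdual b v‖) :
    AntilipschitzWith β⁻¹.toNNReal (Bdual b) := by
  refine ContinuousLinearMap.antilipschitz_of_bound _ ?_
  intro v
  rw [Real.coe_toNNReal', max_eq_left_of_lt (inv_pos.mpr hβ),
    ← inv_mul_le_iff₀ (inv_pos.mpr hβ)]
  simpa using hlow v

/-- if r is orthogonal to the kernel of b, it is in the range of Bdual -/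
theorem mem_range_Bdual (b : E →L[ℝ] V →L[ℝ] ℝ) (β : ℝ) (hβ : 0 < β)
    (hlow : ∀ v : V, β * ‖v‖ ≤ ‖Bdual b v‖) (r : E)
    (hr : ∀ x : E, (∀ v : V, b x v = 0) → ⟪r, x⟫ = 0) :
    ∃ u : V, Bdual b u = r := by
  set R : Submodule ℝ E := LinearMap.range (Bdual b : V →ₗ[ℝ] E) with hR
  have hclosed : IsClosed (R : Set E) :=
    (Bdual_antilipschitz b β hβ hlow).isClosed_range (Bdual b).uniformContinuous
  have : CompleteSpace R := hclosed.completeSpace_coe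
  have hRR : Rᗮᗮ = R := Submodule.orthogonal_orthogonal R
  have hrR : r ∈ Rᗮᗮ := by
    intro x hx
    have hxZ : ∀ v : V, b x v = 0 := by
      intro v
      have := hx (Bdual b v) ⟨v, rfl⟩
      rwa [Bdual_inner] at this
    rw [real_inner_comm]
    exact hr x hxZ
  rw [hRR] at hrR
  exact hrR

end BB

set_option maxHeartbeats 1000000 in
theorem stmt_4 {E V : Type*}
    [NormedAddCommGroup E] [InnerProductSpace ℝ E] [CompleteSpace E]
    [NormedAddCommGroup V] [InnerProductSpace ℝ V] [CompleteSpace V]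
    (a : E →L[ℝ] E →L[ℝ] ℝ) (b : E →L[ℝ] V →L[ℝ] ℝ)
    (Z : Set E) (hZ : Z = {σ : E | ∀ v : V, b σ v = 0})
    (α : ℝ) (hα : 0 < α)
    (hell : ∀ σ ∈ Z, a σ σ ≥ α * ‖σ‖ ^ 2)
    (β : ℝ) (hβ : 0 < β)
    (hinfsup : ∀ v : V, β * ‖v‖ ≤ ⨆ τ : {τ : E // τ ≠ 0}, b τ v / ‖(τ : E)‖) :
    ∀ (κ : E) (l : V), ∃! p : E × V,
      (∀ τ : E, a p.1 τ + b τ p.2 = ⟪κ, τ⟫) ∧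
      (∀ v : V, b p.1 v = ⟪l, v⟫) := by
  intro κ l
  have hlow : ∀ v : V, β * ‖v‖ ≤ ‖Bdual b v‖ := Bdual_lower b β hβ hinfsup
  have hBd : ∀ (v : V) (τ : E), ⟪Bdual b v, τ⟫ = b τ v := Bdual_inner b
  -- coercive bilinear form t on V
  set t : V →L[ℝ] V →L[ℝ] ℝ := b.comp (Bdual b) with ht
  have htapp : ∀ u v : V, t u v = ⟪Bdual b v, Bdual b u⟫ := by
    intro u v; rw [hBd]; rfl
  have hcoer : IsCoercive t := by
    refine ⟨β ^ 2, by positivity, fun u => ?_⟩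
    rw [htapp, real_inner_self_eq_norm_mul_norm]
    have := hlow u
    calc β ^ 2 * ‖u‖ * ‖u‖ = (β * ‖u‖) * (β * ‖u‖) := by ring
      _ ≤ ‖Bdual b u‖ * ‖Bdual b u‖ :=
        mul_le_mul this this (by positivity) (norm_nonneg _)
  set T := hcoer.continuousLinearEquivOfBilin with hT
  -- σ₀ solves b σ₀ v = ⟪l, v⟫
  set σ₀ : E := Bdual b (T.symm l) with hσ₀
  have hσ₀b : ∀ v : V, b σ₀ v = ⟪l, v⟫ := by
    intro v
    have h1 : ⟪T (T.symm l), v⟫ = t (T.symm l) v := hcoer.continuousLinearEquivOfBilin_apply _ _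
    rw [T.apply_symm_apply] at h1
    have h2 : t (T.symm l) v = b σ₀ v := rfl
    rw [← h2, ← h1]
  clear_value σ₀ T t
  clear ht hT hσ₀ htapp hcoer
  -- Z as a closed submodule
  set ZS : Submodule ℝ E := LinearMap.ker (b : E →ₗ[ℝ] V →L[ℝ] ℝ) with hZS
  have hZmem : ∀ x : E, x ∈ ZS ↔ (∀ v : V, b x v = 0) := by
    intro x
    rw [hZS, LinearMap.mem_ker]
    exact ⟨fun h v => by rw [show b x = 0 from h]; rfl,
      fun h => ContinuousLinearMap.ext h⟩
  have hZSclosed : IsClosed (ZS : Set E) := ContinuousLinearMap.isClosed_ker b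
  have : CompleteSpace ZS := hZSclosed.completeSpace_coe
  set i : ZS →L[ℝ] E := ZS.subtypeL with hi
  set aZ : ZS →L[ℝ] ZS →L[ℝ] ℝ := a.bilinearComp i i with haZdef
  have haZ : ∀ w τ : ZS, aZ w τ = a (w : E) (τ : E) := fun w τ =>
    a.bilinearComp_apply i i w τ
  have hcoerZ : IsCoercive aZ := by
    refine ⟨α, hα, fun w => ?_⟩
    have h1 : a (w : E) (w : E) ≥ α * ‖(w : E)‖ ^ 2 := by
      apply hell
      rw [hZ]
      exact fun v => (hZmem w).mp w.2 v
    have h2 : ‖(w : E)‖ = ‖w‖ := rfl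
    rw [haZ]
    have h3 : α * ‖w‖ * ‖w‖ = α * ‖(w : E)‖ ^ 2 := by rw [h2]; ring
    rw [h3]
    exact h1
  set Ta := hcoerZ.continuousLinearEquivOfBilin with hTa
  set g : ZS →L[ℝ] ℝ := (innerSL ℝ κ - a σ₀).comp i with hg
  set rg : ZS := (InnerProductSpace.toDual ℝ ZS).symm g with hrg
  set z : ZS := Ta.symm rg with hz
  have haz : ∀ τ : ZS, a (z : E) (τ : E) = ⟪κ, (τ : E)⟫ - a σ₀ (τ : E) := by
    intro τ
    have h1 : ⟪Ta z, τ⟫ = aZ z τ := hcoerZ.continuousLinearEquivOfBilin_apply _ _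
    rw [hz, Ta.apply_symm_apply] at h1
    have h2 : ⟪rg, τ⟫ = g τ := InnerProductSpace.toDual_symm_apply
    rw [← haZ, ← h1, h2]
    simp only [hg, ContinuousLinearMap.comp_apply, ContinuousLinearMap.sub_apply,
      innerSL_apply_apply]
    rfl
  clear_value z rg g Ta aZ i
  clear hz hrg hg hTa haZdef haZ hcoerZ hi
  set σ : E := σ₀ + (z : E) with hσdef
  have hσa : ∀ x : E, (∀ v : V, b x v = 0) → a σ x = ⟪κ, x⟫ := by
    intro x hx
    have hxZ : x ∈ ZS := (hZmem x).mpr hx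
    have := haz ⟨x, hxZ⟩
    simp only [hσdef, map_add, ContinuousLinearMap.add_apply]
    rw [this]
    ring
  have hσb : ∀ v : V, b σ v = ⟪l, v⟫ := by
    intro v
    have hzb : b (z : E) v = 0 := (hZmem (z : E)).mp z.2 v
    simp only [hσdef, map_add, ContinuousLinearMap.add_apply, hzb, hσ₀b, add_zero]
  -- find u
  set f : E →L[ℝ] ℝ := innerSL ℝ κ - a σ with hf
  set r : E := (InnerProductSpace.toDual ℝ E).symm f with hr
  have hrinner : ∀ x : E, ⟪r, x⟫ = ⟪κ, x⟫ - a σ x := by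
    intro x
    rw [hr]
    rw [InnerProductSpace.toDual_symm_apply]
    simp [hf]
  obtain ⟨u, hu⟩ : ∃ u : V, Bdual b u = r := by
    apply mem_range_Bdual b β hβ hlow
    intro x hx
    rw [hrinner, hσa x hx, sub_self]
  have hbu : ∀ τ : E, b τ u = ⟪κ, τ⟫ - a σ τ := by
    intro τ
    rw [← hBd, hu, hrinner]
  refine ⟨(σ, u), ⟨fun τ => by rw [hbu]; ring, hσb⟩, ?_⟩
  rintro ⟨σ', u'⟩ ⟨hq1, hq2⟩
  -- uniqueness via the homogeneous problem
  have hbd0 : ∀ v : V, b (σ' - σ) v = 0 := by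
    intro v
    simp only [map_sub, ContinuousLinearMap.sub_apply, hσb, hq2, sub_self]
  have hsum : ∀ τ : E, a (σ' - σ) τ + b τ (u' - u) = 0 := by
    intro τ
    have h1 := hq1 τ
    have h2 : a σ τ + b τ u = ⟪κ, τ⟫ := by rw [hbu]; ring
    simp only [map_sub, ContinuousLinearMap.sub_apply]
    linarith
  have hσd : σ' - σ = 0 := by
    have h1 := hsum (σ' - σ)
    have h2 : b (σ' - σ) (u' - u) = 0 := hbd0 _
    have h3 : a (σ' - σ) (σ' - σ) ≥ α * ‖σ' - σ‖ ^ 2 := by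
      apply hell
      rw [hZ]
      exact hbd0
    have h7 : ‖σ' - σ‖ ^ 2 ≤ 0 := le_of_mul_le_mul_left (by linarith) hα
    have h8 : ‖σ' - σ‖ ^ 2 = 0 := le_antisymm h7 (sq_nonneg _)
    exact norm_eq_zero.mp ((pow_eq_zero_iff two_ne_zero).mp h8)
  have hud : u' - u = 0 := by
    have h1 : Bdual b (u' - u) = 0 := by
      rw [← @inner_self_eq_zero ℝ]
      rw [hBd]
      have := hsum (σ' - σ)
      have h2 := hsum (Bdual b (u' - u))
      rw [hσd] at hsum
      have h3 := hsum (Bdual b (u' - u))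
      simpa using h3
    have h2 := hlow (u' - u)
    rw [h1, norm_zero] at h2
    have : ‖u' - u‖ = 0 := by nlinarith [norm_nonneg (u' - u)]
    exact norm_eq_zero.mp this
  have e1 : σ' = σ := sub_eq_zero.mp hσd
  have e2 : u' = u := sub_eq_zero.mp hud
  simp [e1, e2]
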